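/- Let (a,b) ∈ E × E with (a,b) ≠ (0,0), and define f : U → E by f(u) = Tr(au⁴ + bu³). If the zero set Zero(f) = { u ∈ U : f(u) = 0 } has at least 3 elements, then it has exactly 8 elements. -/

import Mathlib

namespace Stmt6Aux

def Cm {E : Type*} [Field E] (p₁ p₂ p₃ p₄ : E) : ℕ → E × E × E × E
  | 0 => (1, 0, 0, 1)
  | k + 1 =>
    ((p₁ ^ 7 ^ k) * (Cm p₁ p₂ p₃ p₄ k).1 + (p₂ ^ 7 ^ k) * (Cm p₁ p₂ p₃ p₄ k).2.2.1,
     (p₁ ^ 7 ^ k) * (Cm p₁ p₂ p₃ p₄ k).2.1 + (p₂ ^ 7 ^ k) * (Cm p₁ p₂ p₃ p₄ k).2.2.2,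
     (p₃ ^ 7 ^ k) * (Cm p₁ p₂ p₃ p₄ k).1 + (p₄ ^ 7 ^ k) * (Cm p₁ p₂ p₃ p₄ k).2.2.1,
     (p₃ ^ 7 ^ k) * (Cm p₁ p₂ p₃ p₄ k).2.1 + (p₄ ^ 7 ^ k) * (Cm p₁ p₂ p₃ p₄ k).2.2.2)

def ee : ℕ → ℕ
  | 0 => 0
  | k + 1 => ee k + 7 ^ k

theorem key {E : Type*} [Field E] [Fact (Nat.Prime 7)] [CharP E 7]
    (p₁ p₂ p₃ p₄ w₁ w₂ lam : E)
    (h1 : p₁ * w₁ + p₂ * w₂ = lam * w₁ ^ 7)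
    (h2 : p₃ * w₁ + p₄ * w₂ = lam * w₂ ^ 7) (k : ℕ) :
    (Cm p₁ p₂ p₃ p₄ k).1 * w₁ + (Cm p₁ p₂ p₃ p₄ k).2.1 * w₂
      = lam ^ ee k * w₁ ^ 7 ^ k ∧
    (Cm p₁ p₂ p₃ p₄ k).2.2.1 * w₁ + (Cm p₁ p₂ p₃ p₄ k).2.2.2 * w₂
      = lam ^ ee k * w₂ ^ 7 ^ k := by
  induction k with
  | zero => simp [Cm, ee]
  | succ k ih =>
    obtain ⟨ih1, ih2⟩ := ih
    have hfr1 : (p₁ * w₁) ^ 7 ^ k + (p₂ * w₂) ^ 7 ^ k = (lam * w₁ ^ 7) ^ 7 ^ k := by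
      rw [← add_pow_char_pow, h1]
    have hfr2 : (p₃ * w₁) ^ 7 ^ k + (p₄ * w₂) ^ 7 ^ k = (lam * w₂ ^ 7) ^ 7 ^ k := by
      rw [← add_pow_char_pow, h2]
    have hee : ee (k + 1) = ee k + 7 ^ k := rfl
    have hpow' : (7:ℕ) ^ (k+1) = 7 * 7 ^ k := pow_succ' 7 k
    constructor
    · simp only [Cm]
      rw [hee, hpow', pow_add, pow_mul]
      linear_combination (p₁ ^ 7 ^ k) * ih1 + (p₂ ^ 7 ^ k) * ih2 + lam ^ ee k * hfr1
    · simp only [Cm]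
      rw [hee, hpow', pow_add, pow_mul]
      linear_combination (p₃ ^ 7 ^ k) * ih1 + (p₄ ^ 7 ^ k) * ih2 + lam ^ ee k * hfr2

end Stmt6Aux

open Stmt6Aux in
/-- Lemma 4, second part: if the zero set of f(u) = Tr(au⁴ + bu³) on U has at least
3 elements, then it has exactly 8 elements. -/
theorem stmt_6 {m : ℕ} (hm : 2 ≤ m) (q : ℕ) (hq : q = 7 ^ m)
    {E : Type*} [Field E] [Fintype E] (hE : Fintype.card E = q ^ 2)
    (a b : E) (hab : ¬(a = 0 ∧ b = 0))
    (h3 : 3 ≤ {u : E | u ^ (q + 1) = 1 ∧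
      (a * u ^ 4 + b * u ^ 3) + (a * u ^ 4 + b * u ^ 3) ^ q = 0}.ncard) :
    {u : E | u ^ (q + 1) = 1 ∧
      (a * u ^ 4 + b * u ^ 3) + (a * u ^ 4 + b * u ^ 3) ^ q = 0}.ncard = 8 := by
  subst hq
  classical
  set q : ℕ := 7 ^ m with hq
  haveI hF7 : Fact (Nat.Prime 7) := ⟨by norm_num⟩
  -- characteristic 7
  haveI hchar : CharP E 7 := by
    obtain ⟨p, hc⟩ := CharP.exists E
    haveI := hc
    obtain ⟨n, hp, hcard⟩ := FiniteField.card E p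
    have hdvd : p ∣ 7 := by
      have h1 : p ∣ Fintype.card E := hcard ▸ dvd_pow_self p n.pos.ne'
      rw [hE] at h1
      have : p ∣ 7 ^ (m * 2) := by rwa [hq, ← pow_mul] at h1
      exact hp.dvd_of_dvd_pow this
    have hp7 : p = 7 := (Nat.prime_dvd_prime_iff_eq hp (by norm_num)).mp hdvd
    rwa [hp7] at hc
  -- Frobenius is injective
  have hfrob : ∀ x y : E, x ^ 7 = y ^ 7 → x = y := by
    intro x y hxy
    have := frobenius_inj E 7
    exact this (by simpa [frobenius_def] using hxy)
  have hadd7 : ∀ x y : E, (x + y) ^ 7 = x ^ 7 + y ^ 7 := fun x y => add_pow_char x y 7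
  -- 6 ∣ 7^n - 1
  have h61 : ∀ n : ℕ, ∃ k, 7 ^ n = 6 * k + 1 := by
    intro n
    induction n with
    | zero => exact ⟨0, rfl⟩
    | succ n ih =>
      obtain ⟨k, hk⟩ := ih
      exact ⟨7 * k + 1, by rw [pow_succ, hk]; ring⟩
  set Z : Set E := {u : E | u ^ (q + 1) = 1 ∧
      (a * u ^ 4 + b * u ^ 3) + (a * u ^ 4 + b * u ^ 3) ^ q = 0} with hZdef
  -- nonvanishing of elements of U
  have hU0 : ∀ u : E, u ^ (q + 1) = 1 → u ≠ 0 := by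
    intro u h1 h0
    rw [h0, zero_pow (Nat.succ_ne_zero q)] at h1
    exact zero_ne_one h1
  -- membership in Z in polynomial form
  have hZiff : ∀ u : E, u ∈ Z ↔ (u ^ (q + 1) = 1 ∧
      a * u ^ 8 + b * u ^ 7 + b ^ q * u + a ^ q = 0) := by
    intro u
    have hfree : ∀ h1 : u ^ (q + 1) = 1,
        u ^ 4 * ((a * u ^ 4 + b * u ^ 3) + (a * u ^ 4 + b * u ^ 3) ^ q)
          = a * u ^ 8 + b * u ^ 7 + b ^ q * u + a ^ q := by
      intro h1
      have hus : u * u ^ q = 1 := by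
        rw [← pow_succ']; exact h1
      have hexp : (a * u ^ 4 + b * u ^ 3) ^ q
          = a ^ q * (u ^ q) ^ 4 + b ^ q * (u ^ q) ^ 3 := by
        rw [hq, add_pow_char_pow, mul_pow, mul_pow, ← pow_mul, ← pow_mul,
          mul_comm 4 (7 ^ m), mul_comm 3 (7 ^ m), pow_mul, pow_mul]
      rw [hexp]
      set s := u ^ q with hs
      linear_combination (a ^ q * (u ^ 3 * s ^ 3 + u ^ 2 * s ^ 2 + u * s + 1)
        + b ^ q * u * (u ^ 2 * s ^ 2 + u * s + 1)) * hus
    constructor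
    · rintro ⟨h1, h2⟩
      refine ⟨h1, ?_⟩
      rw [← hfree h1, h2, mul_zero]
    · rintro ⟨h1, h2⟩
      refine ⟨h1, ?_⟩
      have h4 : u ^ 4 ≠ 0 := pow_ne_zero _ (hU0 u h1)
      have heq := hfree h1
      rw [h2] at heq
      rcases mul_eq_zero.mp heq with h | h
      · exact absurd h h4
      · exact h
  -- basic consequences
  have hq0 : q ≠ 0 := pow_ne_zero m (by norm_num)
  have hQ : ∀ u ∈ Z, a * u ^ 8 + b * u ^ 7 + b ^ q * u + a ^ q = 0 :=
    fun u hu => ((hZiff u).mp hu).2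
  have hUZ : ∀ u ∈ Z, u ^ (q + 1) = 1 := fun u hu => ((hZiff u).mp hu).1
  have hne0 : ∀ u ∈ Z, u ≠ 0 := fun u hu => hU0 u (hUZ u hu)
  -- extract three distinct elements of Z
  obtain ⟨t, hts, htcard⟩ := Set.exists_subset_card_eq h3
  obtain ⟨u₁, u₂, u₃, h12, h13, h23, rfl⟩ := Set.ncard_eq_three.mp htcard
  have hu₁ : u₁ ∈ Z := hts (by simp)
  have hu₂ : u₂ ∈ Z := hts (by simp)
  have hu₃ : u₃ ∈ Z := hts (by simp)
  -- a ≠ 0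
  have ha : a ≠ 0 := by
    intro ha0
    have hb : b ≠ 0 := fun hb0 => hab ⟨ha0, hb0⟩
    have h6 : ∀ u ∈ Z, b * u ^ 6 = -(b ^ q) := by
      intro u hu
      have hQu := hQ u hu
      rw [ha0, zero_mul, zero_add, zero_pow hq0, add_zero] at hQu
      have hfac : u * (b * u ^ 6 + b ^ q) = 0 := by linear_combination hQu
      rcases mul_eq_zero.mp hfac with h | h
      · exact absurd h (hne0 u hu)
      · exact eq_neg_of_add_eq_zero_left h
    obtain ⟨k, hk⟩ := h61 m
    have hsq : ∀ u ∈ Z, ∀ v ∈ Z, u ^ 2 = v ^ 2 := by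
      intro u hu v hv
      have h66 : u ^ 6 = v ^ 6 :=
        mul_left_cancel₀ hb ((h6 u hu).trans (h6 v hv).symm)
      have hqu : (u ^ 6) ^ k * u ^ 2 = 1 := by
        rw [← pow_mul, ← pow_add]
        have h62 : 6 * k + 2 = q + 1 := by rw [hq, hk]
        rw [h62]; exact hUZ u hu
      have hqv : (v ^ 6) ^ k * v ^ 2 = 1 := by
        rw [← pow_mul, ← pow_add]
        have h62 : 6 * k + 2 = q + 1 := by rw [hq, hk]
        rw [h62]; exact hUZ v hv
      have h60 : (u ^ 6) ^ k ≠ 0 := pow_ne_zero _ (pow_ne_zero _ (hne0 u hu))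
      have hco : (u ^ 6) ^ k * u ^ 2 = (u ^ 6) ^ k * v ^ 2 := by
        rw [hqu, h66, hqv]
      exact mul_left_cancel₀ h60 hco
    have hn2 : u₂ = -u₁ := by
      have hfac : (u₂ - u₁) * (u₂ + u₁) = 0 := by
        linear_combination hsq u₂ hu₂ u₁ hu₁
      rcases mul_eq_zero.mp hfac with h | h
      · exact absurd (sub_eq_zero.mp h) h12.symm
      · exact eq_neg_of_add_eq_zero_left h
    have hn3 : u₃ = -u₁ := by
      have hfac : (u₃ - u₁) * (u₃ + u₁) = 0 := by
        linear_combination hsq u₃ hu₃ u₁ hu₁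
      rcases mul_eq_zero.mp hfac with h | h
      · exact absurd (sub_eq_zero.mp h) h13.symm
      · exact eq_neg_of_add_eq_zero_left h
    exact h23 (hn2.trans hn3.symm)
  -- the "determinant" is nonzero
  have hΔ : a ^ (q + 1) ≠ b ^ (q + 1) := by
    intro hDD
    have hb : b ≠ 0 := by
      intro hb0
      rw [hb0, zero_pow (Nat.succ_ne_zero q)] at hDD
      exact ha ((pow_eq_zero_iff (Nat.succ_ne_zero q)).mp hDD)
    have hfac : ∀ u ∈ Z, (a * u + b) * (a * u ^ 7 + b ^ q) = 0 := by
      intro u hu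
      have hQu := hQ u hu
      have hpq : a ^ (q+1) = a * a ^ q := by rw [pow_succ']
      have hpb : b ^ (q+1) = b * b ^ q := by rw [pow_succ']
      linear_combination a * hQu - hpb + hpq - hDD
    have hinj1 : ∀ u v : E, u ≠ v → a * u + b = 0 → a * v + b = 0 → False := by
      intro u v huv h1 h2
      have : a * (u - v) = 0 := by linear_combination h1 - h2
      rcases mul_eq_zero.mp this with h | h
      · exact ha h
      · exact huv (sub_eq_zero.mp h)
    have hinj2 : ∀ u v : E, u ≠ v → a * u ^ 7 + b ^ q = 0 → a * v ^ 7 + b ^ q = 0 → False := by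
      intro u v huv h1 h2
      have : a * (u ^ 7 - v ^ 7) = 0 := by linear_combination h1 - h2
      rcases mul_eq_zero.mp this with h | h
      · exact ha h
      · exact huv (hfrob u v (sub_eq_zero.mp h))
    rcases mul_eq_zero.mp (hfac u₁ hu₁) with H1 | H1 <;>
      rcases mul_eq_zero.mp (hfac u₂ hu₂) with H2 | H2 <;>
        rcases mul_eq_zero.mp (hfac u₃ hu₃) with H3 | H3 <;>
          first
          | exact hinj1 u₁ u₂ h12 H1 H2
          | exact hinj1 u₁ u₃ h13 H1 H3
          | exact hinj1 u₂ u₃ h23 H2 H3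
          | exact hinj2 u₁ u₂ h12 H1 H2
          | exact hinj2 u₁ u₃ h13 H1 H3
          | exact hinj2 u₂ u₃ h23 H2 H3
  -- for u ∈ Z, a*u + b ≠ 0
  have hlam : ∀ u ∈ Z, a * u + b ≠ 0 := by
    intro u hu hl
    have hQu := hQ u hu
    have hsec : b ^ q * u + a ^ q = 0 := by linear_combination hQu - u ^ 7 * hl
    have hpq : a ^ (q + 1) = a * a ^ q := by rw [pow_succ']
    have hpb : b ^ (q + 1) = b * b ^ q := by rw [pow_succ']
    have hfin : b ^ (q + 1) = a ^ (q + 1) := by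
      linear_combination b ^ q * hl - a * hsec + hpb - hpq
    exact hΔ hfin.symm
  -- the semilinear relation satisfied by elements of Z
  have hA : ∀ u ∈ Z, (-(b ^ q)) * u + (-(a ^ q)) * 1 = (a * u + b) * u ^ 7 := by
    intro u hu
    linear_combination -(hQ u hu)
  -- coordinates with respect to the basis (u₁,1), (u₂,1)
  have hd : u₁ - u₂ ≠ 0 := sub_ne_zero.mpr h12
  set α : E := (u₃ - u₂) / (u₁ - u₂) with hαdef
  set β : E := (u₁ - u₃) / (u₁ - u₂) with hβdef
  have hαβ : α + β = 1 := by rw [hαdef, hβdef]; field_simp; ring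
  have hab3 : α * u₁ + β * u₂ = u₃ := by rw [hαdef, hβdef]; field_simp; ring
  have hα0 : α ≠ 0 := div_ne_zero (sub_ne_zero.mpr h23.symm) hd
  have hβ0 : β ≠ 0 := div_ne_zero (sub_ne_zero.mpr h13) hd
  have hu77 : u₁ ^ 7 - u₂ ^ 7 ≠ 0 := sub_ne_zero.mpr (fun h => h12 (hfrob _ _ (sub_eq_zero.mp (by linear_combination h) : _)))
  -- the splitting lemma
  have hsplit : ∀ u ∈ Z, ∀ x y : E, x + y = 1 → x * u₁ + y * u₂ = u →
      x * (a * u₁ + b) = (a * u + b) * x ^ 7 ∧ y * (a * u₂ + b) = (a * u + b) * y ^ 7 := by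
    intro u hu x y hxy1 hxy2
    have h7sum : x ^ 7 + y ^ 7 = 1 := by rw [← hadd7, hxy1, one_pow]
    have h7mix : x ^ 7 * u₁ ^ 7 + y ^ 7 * u₂ ^ 7 = u ^ 7 := by
      rw [← mul_pow, ← mul_pow, ← hadd7, hxy2]
    have hA1 := hA u₁ hu₁
    have hA2 := hA u₂ hu₂
    have hAu := hA u hu
    have e1 : (x * (a * u₁ + b) - (a * u + b) * x ^ 7) * u₁ ^ 7
        + (y * (a * u₂ + b) - (a * u + b) * y ^ 7) * u₂ ^ 7 = 0 := by
      linear_combination (-x) * hA1 + (-y) * hA2 + hAu - (a * u + b) * h7mix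
        - b ^ q * hxy2 - a ^ q * hxy1
    have e2 : (x * (a * u₁ + b) - (a * u + b) * x ^ 7)
        + (y * (a * u₂ + b) - (a * u + b) * y ^ 7) = 0 := by
      linear_combination a * hxy2 + b * hxy1 - (a * u + b) * h7sum
    have e3 : (x * (a * u₁ + b) - (a * u + b) * x ^ 7) * (u₁ ^ 7 - u₂ ^ 7) = 0 := by
      linear_combination e1 - u₂ ^ 7 * e2
    have e4 : x * (a * u₁ + b) - (a * u + b) * x ^ 7 = 0 :=
      (mul_eq_zero.mp e3).resolve_right hu77
    constructor
    · exact sub_eq_zero.mp e4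
    · have : y * (a * u₂ + b) - (a * u + b) * y ^ 7 = 0 := by linear_combination e2 - e4
      exact sub_eq_zero.mp this
  -- ratio relations for u₃
  obtain ⟨hs3, ht3⟩ := hsplit u₃ hu₃ α β hαβ hab3
  have hr1 : a * u₁ + b = (a * u₃ + b) * α ^ 6 := by
    apply mul_left_cancel₀ hα0
    rw [hs3]; ring
  have hr2 : a * u₂ + b = (a * u₃ + b) * β ^ 6 := by
    apply mul_left_cancel₀ hβ0
    rw [ht3]; ring
  -- the product matrix is a nonzero scalar times J
  set N : ℕ := ee m with hNdef
  set c₁ : E := (Cm (-(b ^ q)) (-(a ^ q)) a b m).1 with hc₁def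
  set c₂ : E := (Cm (-(b ^ q)) (-(a ^ q)) a b m).2.1 with hc₂def
  set c₃ : E := (Cm (-(b ^ q)) (-(a ^ q)) a b m).2.2.1 with hc₃def
  set c₄ : E := (Cm (-(b ^ q)) (-(a ^ q)) a b m).2.2.2 with hc₄def
  have hkeyZ : ∀ u ∈ Z, c₁ * u + c₂ = (a * u + b) ^ N * u ^ q
      ∧ c₃ * u + c₄ = (a * u + b) ^ N := by
    intro u hu
    have k2 : a * u + b * 1 = (a * u + b) * 1 ^ 7 := by ring
    obtain ⟨K1, K2⟩ := key (-(b ^ q)) (-(a ^ q)) a b u 1 (a * u + b) (hA u hu) k2 m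
    rw [mul_one] at K1 K2
    rw [one_pow, mul_one] at K2
    rw [← hq] at K1
    exact ⟨K1, K2⟩
  obtain ⟨K11, K12⟩ := hkeyZ u₁ hu₁
  obtain ⟨K21, K22⟩ := hkeyZ u₂ hu₂
  obtain ⟨K31, K32⟩ := hkeyZ u₃ hu₃
  have hus1 : u₁ ^ q * u₁ = 1 := by rw [← pow_succ]; exact hUZ u₁ hu₁
  have hus2 : u₂ ^ q * u₂ = 1 := by rw [← pow_succ]; exact hUZ u₂ hu₂
  have hus3 : u₃ ^ q * u₃ = 1 := by rw [← pow_succ]; exact hUZ u₃ hu₃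
  have quad1 : c₁ * u₁ ^ 2 + c₂ * u₁ = c₃ * u₁ + c₄ := by
    linear_combination u₁ * K11 - K12 + (a * u₁ + b) ^ N * hus1
  have quad2 : c₁ * u₂ ^ 2 + c₂ * u₂ = c₃ * u₂ + c₄ := by
    linear_combination u₂ * K21 - K22 + (a * u₂ + b) ^ N * hus2
  have quad3 : c₁ * u₃ ^ 2 + c₂ * u₃ = c₃ * u₃ + c₄ := by
    linear_combination u₃ * K31 - K32 + (a * u₃ + b) ^ N * hus3
  have d12 : (u₁ - u₂) * (c₁ * (u₁ + u₂) + (c₂ - c₃)) = 0 := by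
    linear_combination quad1 - quad2
  have d13 : (u₁ - u₃) * (c₁ * (u₁ + u₃) + (c₂ - c₃)) = 0 := by
    linear_combination quad1 - quad3
  have A0 := (mul_eq_zero.mp d12).resolve_left (sub_ne_zero.mpr h12)
  have B0 := (mul_eq_zero.mp d13).resolve_left (sub_ne_zero.mpr h13)
  have hc10 : c₁ * (u₂ - u₃) = 0 := by linear_combination A0 - B0
  have hc1 : c₁ = 0 := (mul_eq_zero.mp hc10).resolve_right (sub_ne_zero.mpr h23)
  have hc23 : c₂ = c₃ := by
    have h0 : c₂ - c₃ = 0 := by linear_combination A0 - (u₁ + u₂) * hc1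
    exact sub_eq_zero.mp h0
  have hc4 : c₄ = 0 := by linear_combination -quad1 + u₁ ^ 2 * hc1 + u₁ * hc23
  have hν1 : c₂ * u₁ = (a * u₁ + b) ^ N := by
    linear_combination K12 + u₁ * hc23 - hc4
  have hν : c₂ ≠ 0 := by
    intro h0
    have := hν1
    rw [h0, zero_mul] at this
    exact pow_ne_zero N (hlam u₁ hu₁) this.symm
  -- the master membership lemma
  have hmain : ∀ w₁ w₂ : E, w₂ ≠ 0 →
      (-(b ^ q)) * w₁ + (-(a ^ q)) * w₂ = (a * u₃ + b) * w₁ ^ 7 →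
      a * w₁ + b * w₂ = (a * u₃ + b) * w₂ ^ 7 →
      (w₁ / w₂) ∈ Z := by
    intro w₁ w₂ hw2 hA' hB'
    refine (hZiff _).mpr ⟨?_, ?_⟩
    · obtain ⟨K1, K2⟩ := key (-(b ^ q)) (-(a ^ q)) a b w₁ w₂ (a * u₃ + b) hA' hB' m
      rw [← hq] at K1 K2
      have K1' : c₂ * w₂ = (a * u₃ + b) ^ N * w₁ ^ q := by
        linear_combination K1 - w₁ * hc1
      have K2' : c₂ * w₁ = (a * u₃ + b) ^ N * w₂ ^ q := by
        linear_combination K2 + w₁ * hc23 - w₂ * hc4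
      have h1 : (a * u₃ + b) ^ N * w₁ ^ (q + 1) = (a * u₃ + b) ^ N * w₂ ^ (q + 1) := by
        rw [pow_succ, pow_succ]
        linear_combination w₂ * K2' - w₁ * K1'
      have hwq : w₁ ^ (q + 1) = w₂ ^ (q + 1) :=
        mul_left_cancel₀ (pow_ne_zero N (hlam u₃ hu₃)) h1
      rw [div_pow, hwq, div_self (pow_ne_zero _ hw2)]
    · have hpoly : a * w₁ ^ 8 + b * (w₁ ^ 7 * w₂) + b ^ q * (w₁ * w₂ ^ 7)
          + a ^ q * w₂ ^ 8 = 0 := by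
        linear_combination w₁ ^ 7 * hB' - w₂ ^ 7 * hA'
      have h8 : w₂ ^ 8 ≠ 0 := pow_ne_zero _ hw2
      have h0 : (a * (w₁ / w₂) ^ 8 + b * (w₁ / w₂) ^ 7 + b ^ q * (w₁ / w₂) + a ^ q) * w₂ ^ 8
          = a * w₁ ^ 8 + b * (w₁ ^ 7 * w₂) + b ^ q * (w₁ * w₂ ^ 7) + a ^ q * w₂ ^ 8 := by
        field_simp
      exact (mul_eq_zero.mp (h0.trans hpoly)).resolve_right h8
  -- sixth roots of unity facts
  have hω0 : ∀ ω : E, ω ^ 6 = 1 → ω ≠ 0 := by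
    intro ω hω h0
    rw [h0, zero_pow (by norm_num : (6:ℕ) ≠ 0)] at hω
    exact zero_ne_one hω
  have hω7 : ∀ ω : E, ω ^ 6 = 1 → ω ^ 7 = ω := by
    intro ω hω
    rw [pow_succ, hω, one_mul]
  -- the two semilinear relations for the candidate solutions
  have hrelB : ∀ ω : E, ω ^ 6 = 1 →
      a * (α * ω * u₁ + β * u₂) + b * (α * ω + β)
        = (a * u₃ + b) * (α * ω + β) ^ 7 := by
    intro ω hω
    have h7 : (α * ω + β) ^ 7 = (α * ω) ^ 7 + β ^ 7 := hadd7 _ _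
    rw [h7]
    linear_combination (α * ω) * hr1 + β * hr2 - (a * u₃ + b) * α ^ 7 * (hω7 ω hω)
  have hrelA : ∀ ω : E, ω ^ 6 = 1 →
      (-(b ^ q)) * (α * ω * u₁ + β * u₂) + (-(a ^ q)) * (α * ω + β)
        = (a * u₃ + b) * (α * ω * u₁ + β * u₂) ^ 7 := by
    intro ω hω
    have h7 : (α * ω * u₁ + β * u₂) ^ 7 = (α * ω * u₁) ^ 7 + (β * u₂) ^ 7 := hadd7 _ _
    rw [h7]
    linear_combination (α * ω) * hA u₁ hu₁ + β * hA u₂ hu₂ + (α * ω * u₁ ^ 7) * hr1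
      + (β * u₂ ^ 7) * hr2 - ((a * u₃ + b) * α ^ 7 * u₁ ^ 7) * (hω7 ω hω)
  -- denominators do not vanish
  have hden : ∀ ω : E, ω ^ 6 = 1 → α * ω + β ≠ 0 := by
    intro ω hω h0
    have hrel2 := hrelB ω hω
    rw [h0] at hrel2
    have hz : a * (α * ω * (u₁ - u₂)) = 0 := by linear_combination hrel2 - a * u₂ * h0
    exact (mul_ne_zero ha (mul_ne_zero (mul_ne_zero hα0 (hω0 ω hω)) hd)) hz
  -- the candidate zero set
  set gm : E → E := fun ω => (α * ω * u₁ + β * u₂) / (α * ω + β) with hgm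
  set S : Set E := insert u₁ (insert u₂ (gm '' {ω : E | ω ^ 6 = 1})) with hS
  have hZS : Z = S := by
    ext u
    constructor
    · intro hu
      set x : E := (u - u₂) / (u₁ - u₂) with hxdef
      set y : E := (u₁ - u) / (u₁ - u₂) with hydef
      have hxy1 : x + y = 1 := by rw [hxdef, hydef]; field_simp; ring
      have hxy2 : x * u₁ + y * u₂ = u := by rw [hxdef, hydef]; field_simp; ring
      by_cases hx : x = 0
      · have hy1 : y = 1 := by rw [← hxy1, hx, zero_add]
        have huu : u = u₂ := by rw [← hxy2, hx, hy1]; ring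
        rw [hS, huu]
        exact Set.mem_insert_of_mem _ (Set.mem_insert _ _)
      by_cases hy : y = 0
      · have hx1 : x = 1 := by rw [← hxy1, hy, add_zero]
        have huu : u = u₁ := by rw [← hxy2, hx1, hy]; ring
        rw [hS, huu]
        exact Set.mem_insert _ _
      obtain ⟨hsx, hsy⟩ := hsplit u hu x y hxy1 hxy2
      have hlu := hlam u hu
      have hx6 : a * u₁ + b = (a * u + b) * x ^ 6 := by
        apply mul_left_cancel₀ hx
        rw [hsx]; ring
      have hy6 : a * u₂ + b = (a * u + b) * y ^ 6 := by
        apply mul_left_cancel₀ hy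
        rw [hsy]; ring
      set ω : E := (x * β) / (y * α) with hωdef
      have hyα : y * α ≠ 0 := mul_ne_zero hy hα0
      have hω6 : ω ^ 6 = 1 := by
        have hkey6 : (x * β) ^ 6 * ((a * u₃ + b) * (a * u + b))
            = (y * α) ^ 6 * ((a * u₃ + b) * (a * u + b)) := by
          linear_combination (-((a * u₃ + b) * β ^ 6)) * hx6 + ((a * u₃ + b) * α ^ 6) * hy6
            + (a * u₂ + b) * hr1 - (a * u₁ + b) * hr2
        have h66 : (x * β) ^ 6 = (y * α) ^ 6 :=
          mul_right_cancel₀ (mul_ne_zero (hlam u₃ hu₃) hlu) hkey6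
        rw [hωdef, div_pow, h66, div_self (pow_ne_zero 6 hyα)]
      have hαω : α * ω = x * β / y := by
        rw [hωdef]; field_simp
      have hden2 : α * ω + β = β / y := by
        rw [hαω]; have hyy := mul_inv_cancel₀ hy; linear_combination (β / y) * hxy1 - β * hyy
      have hgmu : gm ω = u := by
        rw [hgm]
        show (α * ω * u₁ + β * u₂) / (α * ω + β) = u
        rw [hden2, hαω]
        rw [div_eq_iff (div_ne_zero hβ0 hy)]; have hyy := mul_inv_cancel₀ hy
        linear_combination (β / y) * hxy2 - β * u₂ * hyy
      rw [hS]
      exact Set.mem_insert_of_mem _ (Set.mem_insert_of_mem _ ⟨ω, hω6, hgmu⟩)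
    · intro hu
      rw [hS] at hu
      rcases Set.mem_insert_iff.mp hu with rfl | hu'
      · exact hu₁
      rcases Set.mem_insert_iff.mp hu' with rfl | hu''
      · exact hu₂
      obtain ⟨ω, hω6, rfl⟩ := hu''
      have hgv : gm ω = (α * ω * u₁ + β * u₂) / (α * ω + β) := rfl
      rw [hgv]
      exact hmain (α * ω * u₁ + β * u₂) (α * ω + β) (hden ω hω6)
        (hrelA ω hω6) (hrelB ω hω6)
  -- counting
  have hdvd6 : (6:ℕ) ∣ Fintype.card Eˣ := by
    obtain ⟨k, hk⟩ := h61 (2 * m)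
    have hcardE : Fintype.card E = 7 ^ (2 * m) := by
      rw [hE, hq, ← pow_mul, mul_comm]
    have hcu : Fintype.card Eˣ = 7 ^ (2 * m) - 1 := by
      rw [Fintype.card_units, hcardE]
    rw [hcu, hk]
    omega
  obtain ⟨g, hg⟩ := IsCyclic.exists_generator (α := Eˣ)
  have hord : orderOf g = Fintype.card Eˣ := (orderOf_eq_card_of_forall_mem_zpowers hg).trans (Nat.card_eq_fintype_card)
  have hprim : IsPrimitiveRoot ((g : Eˣ) : E) (Fintype.card Eˣ) := by
    rw [← hord]
    exact IsPrimitiveRoot.coe_units_iff.mpr (IsPrimitiveRoot.orderOf g)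
  obtain ⟨k6, hk6⟩ := hdvd6
  have hprim6 : IsPrimitiveRoot (((g : Eˣ) : E) ^ k6) 6 :=
    hprim.pow Fintype.card_pos (by rw [hk6, mul_comm])
  have hMfin : {ω : E | ω ^ 6 = 1} = ↑(Polynomial.nthRootsFinset 6 (1 : E)) := by
    ext ω
    simp [Polynomial.mem_nthRootsFinset (by norm_num : 0 < 6) (1 : E)]
  have hM6 : ({ω : E | ω ^ 6 = 1}).ncard = 6 := by
    rw [hMfin, Set.ncard_coe_finset, hprim6.card_nthRootsFinset]
  have hginj : Set.InjOn gm {ω : E | ω ^ 6 = 1} := by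
    intro ω hω ω' hω' heq
    have d1 := hden ω hω
    have d2 := hden ω' hω'
    rw [hgm] at heq
    simp only at heq
    rw [div_eq_div_iff d1 d2] at heq
    have hz : (α * β * (u₁ - u₂)) * (ω - ω') = 0 := by linear_combination heq
    have := (mul_eq_zero.mp hz).resolve_left
      (mul_ne_zero (mul_ne_zero hα0 hβ0) hd)
    exact sub_eq_zero.mp this
  have hnotin2 : u₂ ∉ gm '' {ω : E | ω ^ 6 = 1} := by
    rintro ⟨ω, hω, hgw⟩
    have d := hden ω hω
    rw [hgm] at hgw
    simp only at hgw
    rw [div_eq_iff d] at hgw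
    have hz : (α * ω) * (u₁ - u₂) = 0 := by linear_combination hgw
    exact (mul_ne_zero (mul_ne_zero hα0 (hω0 ω hω)) hd) hz
  have hnotin1 : u₁ ∉ insert u₂ (gm '' {ω : E | ω ^ 6 = 1}) := by
    intro h
    rcases Set.mem_insert_iff.mp h with h' | ⟨ω, hω, hgw⟩
    · exact h12 h'
    have d := hden ω hω
    rw [hgm] at hgw
    simp only at hgw
    rw [div_eq_iff d] at hgw
    have hz : β * (u₂ - u₁) = 0 := by linear_combination hgw
    exact (mul_ne_zero hβ0 (sub_ne_zero.mpr h12.symm)) hz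
  rw [hZS, hS, Set.ncard_insert_of_notMem hnotin1 (Set.toFinite _),
    Set.ncard_insert_of_notMem hnotin2 (Set.toFinite _),
    Set.ncard_image_of_injOn hginj, hM6]
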